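/- Let θ ∈ ℝ with sin θ ≠ 0, set [m] := sin(mθ)/sin θ for m ∈ ℤ, and assume [2] ≠ 0, [3] ≠ 0, [3] ≥ 0 and [2]·[4] ≥ 0. Then both real 2×2 matrices M₁ := (1/[2]) · [[ 1, √[3] ], [ √[3], [3] ]] and M₂ := (1/[3]) · [[ [4], √([2][4]) ], [ √([2][4]), [2] ]] satisfy Mᵢ·Mᵢ = [2]·Mᵢ. -/

import Mathlib

/-- Trigonometric quantum integer `[m] = sin(mθ)/sin θ`. -/
noncomputable def qit (θ : ℝ) (m : ℤ) : ℝ := Real.sin (m * θ) / Real.sin θ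

lemma qit_id1 (θ : ℝ) (hθ : Real.sin θ ≠ 0) : qit θ 2 ^ 2 = 1 + qit θ 3 := by
  unfold qit
  have h1 : Real.sin (((2 : ℤ) : ℝ) * θ) = 2 * Real.sin θ * Real.cos θ := by
    push_cast; rw [Real.sin_two_mul]
  have h2 : Real.sin (((3 : ℤ) : ℝ) * θ) = 3 * Real.sin θ - 4 * Real.sin θ ^ 3 := by
    push_cast; rw [Real.sin_three_mul]
  have hpyth := Real.sin_sq_add_cos_sq θ
  rw [h1, h2]
  field_simp
  linear_combination 4 * hpyth

lemma qit_id2 (θ : ℝ) (hθ : Real.sin θ ≠ 0) :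
    qit θ 2 * qit θ 3 = qit θ 2 + qit θ 4 := by
  unfold qit
  have h1 : Real.sin (((2 : ℤ) : ℝ) * θ) = 2 * Real.sin θ * Real.cos θ := by
    push_cast; rw [Real.sin_two_mul]
  have h2 : Real.sin (((3 : ℤ) : ℝ) * θ) = 3 * Real.sin θ - 4 * Real.sin θ ^ 3 := by
    push_cast; rw [Real.sin_three_mul]
  have h3 : Real.sin (((4 : ℤ) : ℝ) * θ)
      = 2 * (2 * Real.sin θ * Real.cos θ) * (2 * Real.cos θ ^ 2 - 1) := by
    have : ((4 : ℤ) : ℝ) * θ = 2 * (2 * θ) := by push_cast; ring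
    rw [this, Real.sin_two_mul, Real.sin_two_mul, Real.cos_two_mul]
  have hpyth := Real.sin_sq_add_cos_sq θ
  rw [h1, h2, h3]
  field_simp
  linear_combination (-4 * Real.cos θ) * hpyth

/-- Both 2×2 blocks U^{b_i}_{d_i} and U^{c_i}_{c_{i+3}} satisfy the Hecke
relation M·M = [2]·M. -/
theorem twoByTwo_hecke_blocks (θ : ℝ) (hθ : Real.sin θ ≠ 0)
    (h2 : qit θ 2 ≠ 0) (h3 : qit θ 3 ≠ 0) (h3pos : 0 ≤ qit θ 3)
    (h24 : 0 ≤ qit θ 2 * qit θ 4) :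
    (((1 / qit θ 2) • !![(1 : ℝ), Real.sqrt (qit θ 3);
                         Real.sqrt (qit θ 3), qit θ 3]) *
       ((1 / qit θ 2) • !![(1 : ℝ), Real.sqrt (qit θ 3);
                           Real.sqrt (qit θ 3), qit θ 3])
      = qit θ 2 • ((1 / qit θ 2) • !![(1 : ℝ), Real.sqrt (qit θ 3);
                                      Real.sqrt (qit θ 3), qit θ 3])) ∧
    (((1 / qit θ 3) • !![qit θ 4, Real.sqrt (qit θ 2 * qit θ 4);
                         Real.sqrt (qit θ 2 * qit θ 4), qit θ 2]) *
       ((1 / qit θ 3) • !![qit θ 4, Real.sqrt (qit θ 2 * qit θ 4);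
                           Real.sqrt (qit θ 2 * qit θ 4), qit θ 2])
      = qit θ 2 • ((1 / qit θ 3) • !![qit θ 4, Real.sqrt (qit θ 2 * qit θ 4);
                                      Real.sqrt (qit θ 2 * qit θ 4), qit θ 2])) := by
  have hid1 := qit_id1 θ hθ
  have hid2 := qit_id2 θ hθ
  have hs3 : Real.sqrt (qit θ 3) ^ 2 = qit θ 3 := Real.sq_sqrt h3pos
  have hs24 : Real.sqrt (qit θ 2 * qit θ 4) ^ 2 = qit θ 2 * qit θ 4 :=
    Real.sq_sqrt h24
  refine ⟨?_, ?_⟩ <;> ext i j <;> fin_cases i <;> fin_cases j <;>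
      simp [Matrix.mul_apply, Fin.sum_univ_two] <;> field_simp
  · linear_combination hs3 - hid1
  · linear_combination -hid1
  · linear_combination -hid1
  · linear_combination hs3 - qit θ 3 * hid1
  · linear_combination -qit θ 4 * hid2 + (by rw [mul_comm]; exact hs24 : Real.sqrt (qit θ 4 * qit θ 2) ^ 2 = qit θ 4 * qit θ 2)
  · linear_combination -Real.sqrt (qit θ 4 * qit θ 2) * hid2
  · linear_combination -Real.sqrt (qit θ 2 * qit θ 4) * hid2
  · linear_combination hs24 - qit θ 2 * hid2
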